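/- Let X = SO_{2n+1}/B and Y = Sp_{2n}/B with common Weyl group 𝔅_n, and let C_{u,v}^w(X), C_{u,v}^w(Y) denote the equivariant Schubert structure coefficients, characterized by the pointwise relations ξ_u|_x · ξ_v|_x = Σ_w C_{u,v}^w ξ_w|_x for all x ∈ 𝔅_n, where ξ_w|_x is given by Billey's formula. Then C_{u,v}^w(X) = 2^{s(w)-s(u)-s(v)} · overline{C_{u,v}^w(Y)}, where the overline denotes the substitution γ_1 ↦ 2β_1, γ_i ↦ β_i (i > 1), and s(w) is the number of negative entries of w. -/
import Mathlib


open CoxeterSystem MvPolynomial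

section Defs

variable {B : Type} [DecidableEq B] {W : Type} [Group W] {M : CoxeterMatrix B}

/-- The simple reflection action on the root lattice determined by the "Cartan" integers `A`:
`s_i` sends `α_j ↦ α_j - (A i j) • α_i` (extended linearly, where `α_j = single j 1`). -/
noncomputable def cartanRefl (A : B → B → ℤ) (i : B) (x : B →₀ ℤ) : B →₀ ℤ :=
  x - (x.sum fun j c => c * A i j) • Finsupp.single i 1

/-- The action of the word `s_{a_1} s_{a_2} ⋯ s_{a_m}` on the root lattice. -/
noncomputable def wordAct (A : B → B → ℤ) (l : List B) (x : B →₀ ℤ) : B →₀ ℤ :=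
  l.foldr (cartanRefl A) x

/-- The root `s_{a_1} ⋯ s_{a_{k-1}} (α_{a_k})` attached to position `k` of the word
`l = (a_1, …, a_m)`. -/
noncomputable def rootOf (A : B → B → ℤ) (l : List B) (k : Fin l.length) : B →₀ ℤ :=
  wordAct A (l.take k) (Finsupp.single (l.get k) 1)

/-- A vector of the root lattice is positive if it is nonzero with nonnegative coordinates
in the simple roots. -/
def IsPosRoot (x : B →₀ ℤ) : Prop := x ≠ 0 ∧ ∀ j, 0 ≤ x j

/-- Interpret a root-lattice vector `Σ c_i α_i` as the linear polynomial `Σ c_i X_i` in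
`ℤ[α_1, …, α_r]`. -/
noncomputable def toPoly (x : B →₀ ℤ) : MvPolynomial B ℤ := x.sum fun i c => c • X i

/-- `l` is a reduced word for `w`. -/
def IsReducedWordFor (cs : CoxeterSystem M W) (l : List B) (w : W) : Prop :=
  cs.IsReduced l ∧ cs.wordProd l = w

/-- The subword of `l` occupying the set of positions `J`. -/
def select (l : List B) (J : Finset (Fin l.length)) : List B :=
  ((List.finRange l.length).filter (· ∈ J)).map l.get

open Classical in
/-- Billey's restriction `ξ_w|_v`, computed from a word `l` (a reduced word for `v`):
the sum over all subwords `J ⊆ {1, …, ℓ}` of `l` that are reduced words for `w` of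
`∏_{k ∈ J} s_{a_1} ⋯ s_{a_{k-1}} (α_{a_k})`. -/
noncomputable def billey (cs : CoxeterSystem M W) (A : B → B → ℤ) (w : W) (l : List B) :
    MvPolynomial B ℤ :=
  ∑ J : Finset (Fin l.length),
    if IsReducedWordFor cs (select l J) w then ∏ k ∈ J, toPoly (rootOf A l k) else 0

/-- Bruhat order on `W`, via the subword property. -/
def bruhatLE (cs : CoxeterSystem M W) (u v : W) : Prop :=
  ∃ lv, IsReducedWordFor cs lv v ∧ ∃ lu, lu.Sublist lv ∧ IsReducedWordFor cs lu u

end Defs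

section TypeBC

/-- The Coxeter matrix shared by the root systems `B_n` and `C_n` (hyperoctahedral Weyl
group): the bond between nodes 1 and 2 (indices 0 and 1) is a 4-bond, consecutive nodes
otherwise have 3-bonds. -/
def BCMatrix (n : ℕ) : CoxeterMatrix (Fin n) where
  M := Matrix.of fun i j : Fin n =>
    if i = j then 1
      else if ((i : ℕ) = 0 ∧ (j : ℕ) = 1) ∨ ((j : ℕ) = 0 ∧ (i : ℕ) = 1) then 4
      else if (j : ℕ) + 1 = i ∨ (i : ℕ) + 1 = j then 3 else 2
  isSymm := by unfold Matrix.IsSymm; aesop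
  diagonal := by simp
  off_diagonal := by aesop

/-- The Cartan integers of type `B_n` (simple roots `β_1, …, β_n`, with `β_1` short):
`s_i (β_j) = β_j - (cartanB n i j) • β_i`; in particular `s_1 (β_2) = β_2 + 2 β_1`. -/
def cartanB (n : ℕ) (i j : Fin n) : ℤ :=
  if i = j then 2
    else if (i : ℕ) = 0 ∧ (j : ℕ) = 1 then -2
    else if (j : ℕ) + 1 = i ∨ (i : ℕ) + 1 = j then -1 else 0

/-- The Cartan integers of type `C_n` (simple roots `γ_1, …, γ_n`, with `γ_1` long):
`s_i (γ_j) = γ_j - (cartanC n i j) • γ_i`; in particular `s_2 (γ_1) = γ_1 + 2 γ_2`. -/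
def cartanC (n : ℕ) (i j : Fin n) : ℤ :=
  if i = j then 2
    else if (i : ℕ) = 1 ∧ (j : ℕ) = 0 then -2
    else if (j : ℕ) + 1 = i ∨ (i : ℕ) + 1 = j then -1 else 0

/-- The substitution `γ_1 ↦ 2 β_1`, `γ_i ↦ β_i` for `i > 1`, as an algebra endomorphism of
`ℤ[X_1, …, X_n]`. -/
noncomputable def barSub (n : ℕ) : MvPolynomial (Fin n) ℤ →ₐ[ℤ] MvPolynomial (Fin n) ℤ :=
  MvPolynomial.bind₁ fun i : Fin n =>
    if (i : ℕ) = 0 then 2 * MvPolynomial.X i else MvPolynomial.X i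

end TypeBC
section Aux

set_option linter.unusedSectionVars false
variable {B : Type} [DecidableEq B] {W : Type} [Group W] {M : CoxeterMatrix B}

private def linA (A : B → B → ℤ) (i : B) (x : B →₀ ℤ) : ℤ := x.sum fun j c => c * A i j

private lemma linA_eq (A : B → B → ℤ) (i : B) (x : B →₀ ℤ) :
    linA A i x = Finsupp.linearCombination ℤ (A i) x := by
  simp [linA, Finsupp.linearCombination_apply, smul_eq_mul]

private lemma linA_sub (A : B → B → ℤ) (i : B) (x y : B →₀ ℤ) :
    linA A i (x - y) = linA A i x - linA A i y := by simp [linA_eq]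

private lemma linA_add (A : B → B → ℤ) (i : B) (x y : B →₀ ℤ) :
    linA A i (x + y) = linA A i x + linA A i y := by simp [linA_eq]

private lemma linA_smul (A : B → B → ℤ) (i : B) (c : ℤ) (x : B →₀ ℤ) :
    linA A i (c • x) = c * linA A i x := by simp [linA_eq]

private lemma linA_single (A : B → B → ℤ) (i j : B) (c : ℤ) :
    linA A i (Finsupp.single j c) = c * A i j := by
  simp [linA_eq, Finsupp.linearCombination_single, smul_eq_mul]

private lemma cartanRefl_def (A : B → B → ℤ) (i : B) (x : B →₀ ℤ) :
    cartanRefl A i x = x - linA A i x • Finsupp.single i 1 := rfl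

private lemma cartanRefl_invol (A : B → B → ℤ) (i : B) (h : A i i = 2) (x : B →₀ ℤ) :
    cartanRefl A i (cartanRefl A i x) = x := by
  rw [cartanRefl_def, cartanRefl_def, linA_sub, linA_smul, linA_single, h]
  have : linA A i x - linA A i x * (1 * 2) = - linA A i x := by ring
  rw [this, neg_smul, sub_neg_eq_add, sub_add_cancel]

private lemma cartanRefl_zero (A : B → B → ℤ) (i : B) : cartanRefl A i 0 = 0 := by
  rw [cartanRefl_def]
  simp [linA]

private lemma cartanRefl_smul (A : B → B → ℤ) (i : B) (c : ℤ) (x : B →₀ ℤ) :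
    cartanRefl A i (c • x) = c • cartanRefl A i x := by
  rw [cartanRefl_def, cartanRefl_def, linA_smul, smul_sub, mul_smul]

private lemma wordAct_nil (A : B → B → ℤ) (x : B →₀ ℤ) : wordAct A [] x = x := rfl

private lemma wordAct_cons (A : B → B → ℤ) (a : B) (l : List B) (x : B →₀ ℤ) :
    wordAct A (a :: l) x = cartanRefl A a (wordAct A l x) := rfl

private lemma wordAct_injective (A : B → B → ℤ) (h : ∀ i, A i i = 2) (l : List B) :
    Function.Injective (wordAct A l) := by
  induction l with
  | nil => exact fun x y hxy => hxy
  | cons a l ih =>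
    intro x y hxy
    apply ih
    have := congrArg (cartanRefl A a) hxy
    rwa [wordAct_cons, wordAct_cons, cartanRefl_invol A a (h a), cartanRefl_invol A a (h a)]
      at this

private lemma wordAct_zero (A : B → B → ℤ) (l : List B) : wordAct A l 0 = 0 := by
  induction l with
  | nil => rfl
  | cons a l ih => rw [wordAct_cons, ih, cartanRefl_zero]

private lemma wordAct_smul (A : B → B → ℤ) (l : List B) (c : ℤ) (x : B →₀ ℤ) :
    wordAct A l (c • x) = c • wordAct A l x := by
  induction l with
  | nil => rfl
  | cons a l ih => rw [wordAct_cons, wordAct_cons, ih, cartanRefl_smul]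

private lemma rootOf_ne_zero (A : B → B → ℤ) (h : ∀ i, A i i = 2) (l : List B)
    (k : Fin l.length) : rootOf A l k ≠ 0 := by
  intro hk
  have h0 : wordAct A (l.take k) 0 = 0 := wordAct_zero A _
  have := wordAct_injective A h (l.take k) (hk.trans h0.symm)
  exact one_ne_zero (Finsupp.single_eq_zero.mp this)

end Aux
section Aux2

set_option linter.unusedSectionVars false
variable {B : Type} [DecidableEq B]

private lemma toPoly_eq (x : B →₀ ℤ) :
    toPoly x = Finsupp.linearCombination ℤ (X : B → MvPolynomial B ℤ) x := rfl

private lemma toPoly_ne_zero {x : B →₀ ℤ} (hx : x ≠ 0) : toPoly x ≠ 0 := by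
  rw [toPoly_eq]
  intro h
  exact hx (linearIndependent_iff.mp (MvPolynomial.linearIndependent_X (σ := B) (R := ℤ)) x h)

private lemma toPoly_smul (c : ℤ) (x : B →₀ ℤ) : toPoly (c • x) = c • toPoly x := by
  simp [toPoly_eq]

private lemma toPoly_add (x y : B →₀ ℤ) : toPoly (x + y) = toPoly x + toPoly y := by
  simp [toPoly_eq]

private lemma toPoly_single (i : B) (c : ℤ) : toPoly (Finsupp.single i c) = c • X i := by
  simp [toPoly_eq, Finsupp.linearCombination_single]

/-- doubling the `z`-coordinate -/
private noncomputable def doub (z : B) (x : B →₀ ℤ) : B →₀ ℤ := x + x z • Finsupp.single z 1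

private lemma doub_add (z : B) (x y : B →₀ ℤ) : doub z (x + y) = doub z x + doub z y := by
  simp only [doub, Finsupp.add_apply, add_smul]
  abel

private lemma doub_smul (z : B) (c : ℤ) (x : B →₀ ℤ) : doub z (c • x) = c • doub z x := by
  simp only [doub, Finsupp.smul_apply, smul_add, smul_eq_mul, mul_smul]

private lemma doub_sub (z : B) (x y : B →₀ ℤ) : doub z (x - y) = doub z x - doub z y := by
  simp only [doub, Finsupp.sub_apply, sub_smul]
  abel

private lemma doub_single_one (z i : B) :
    doub z (Finsupp.single i 1) = (if i = z then (2:ℤ) else 1) • Finsupp.single i 1 := by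
  rcases eq_or_ne i z with h | h
  · subst h
    simp [doub, Finsupp.single_apply, two_smul]
  · simp [doub, Finsupp.single_apply, h]

private lemma doub_apply_z (z : B) (x : B →₀ ℤ) : (doub z x) z = 2 * x z := by
  simp [doub, Finsupp.single_apply, two_mul, mul_comm]

end Aux2
section Aux3

set_option linter.unusedSectionVars false

private lemma finsupp_sum_point {B : Type} [DecidableEq B] {N : Type} [AddCommMonoid N]
    (x : B →₀ ℤ) (z : B) (g : ℤ → N) (hg : g 0 = 0) :
    (x.sum fun j c => if j = z then g c else 0) = g (x z) := by
  rw [Finsupp.sum, Finset.sum_ite_eq' x.support z (fun j => g (x j))]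
  split_ifs with h
  · rfl
  · rw [Finsupp.notMem_support_iff.mp h, hg]

private lemma cartanCB {n : ℕ} (hn : 0 < n) (i j : Fin n) :
    cartanC n i j * (if i = (⟨0, hn⟩ : Fin n) then 2 else 1) =
      cartanB n i j + (if j = (⟨0, hn⟩ : Fin n) then cartanB n i ⟨0, hn⟩ else 0) := by
  simp only [cartanB, cartanC, Fin.ext_iff, Fin.val_mk]
  split_ifs <;> (try simp_all) <;> omega

private lemma linA_doub {n : ℕ} (hn : 0 < n) (i : Fin n) (x : Fin n →₀ ℤ) :
    linA (cartanB n) i (doub ⟨0, hn⟩ x) =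
      linA (cartanC n) i x * (if i = (⟨0, hn⟩ : Fin n) then 2 else 1) := by
  rw [doub, linA_add, linA_smul, linA_single, one_mul]
  rw [linA, linA, Finsupp.sum, Finsupp.sum, Finset.sum_mul]
  have hterm : ∀ j ∈ x.support, x j * cartanC n i j * (if i = (⟨0, hn⟩ : Fin n) then 2 else 1)
      = x j * cartanB n i j + (if j = (⟨0, hn⟩ : Fin n) then x j * cartanB n i ⟨0, hn⟩ else 0) := by
    intro j _
    rw [mul_assoc, cartanCB hn i j, mul_add]
    split_ifs <;> simp
  rw [Finset.sum_congr rfl hterm, Finset.sum_add_distrib]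
  congr 1
  rw [Finset.sum_ite_eq' x.support (⟨0, hn⟩ : Fin n) (fun j => x j * cartanB n i ⟨0, hn⟩)]
  split_ifs with h
  · rfl
  · rw [Finsupp.notMem_support_iff.mp h, zero_mul]

private lemma doub_cartanRefl {n : ℕ} (hn : 0 < n) (i : Fin n) (x : Fin n →₀ ℤ) :
    doub ⟨0, hn⟩ (cartanRefl (cartanC n) i x) = cartanRefl (cartanB n) i (doub ⟨0, hn⟩ x) := by
  rw [cartanRefl_def (cartanC n), doub_sub, doub_smul, doub_single_one, smul_smul,
    cartanRefl_def, linA_doub hn]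

private lemma doub_wordAct {n : ℕ} (hn : 0 < n) (l : List (Fin n)) (x : Fin n →₀ ℤ) :
    doub ⟨0, hn⟩ (wordAct (cartanC n) l x) = wordAct (cartanB n) l (doub ⟨0, hn⟩ x) := by
  induction l with
  | nil => rfl
  | cons a l ih => rw [wordAct_cons, wordAct_cons, doub_cartanRefl hn, ih]

private lemma doub_rootOf {n : ℕ} (hn : 0 < n) (l : List (Fin n)) (k : Fin l.length) :
    doub ⟨0, hn⟩ (rootOf (cartanC n) l k) =
      (if l.get k = (⟨0, hn⟩ : Fin n) then (2:ℤ) else 1) • rootOf (cartanB n) l k := by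
  unfold rootOf
  rw [doub_wordAct hn, doub_single_one, wordAct_smul]

private lemma barSub_toPoly {n : ℕ} (hn : 0 < n) (x : Fin n →₀ ℤ) :
    barSub n (toPoly x) = toPoly (doub ⟨0, hn⟩ x) := by
  have hterm : ∀ (i : Fin n) (c : ℤ), barSub n (c • X i)
      = c • X i + (if i = (⟨0, hn⟩ : Fin n) then c • X (⟨0, hn⟩ : Fin n) else 0) := by
    intro i c
    rw [map_smul, barSub, bind₁_X_right]
    rcases eq_or_ne i (⟨0, hn⟩ : Fin n) with h | h
    · subst h
      rw [if_pos rfl, if_pos rfl, two_mul, smul_add]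
    · rw [if_neg h, if_neg (by simpa [Fin.ext_iff] using h), add_zero]
  rw [toPoly, map_finsuppSum, doub, toPoly_add, toPoly_smul, toPoly_single, one_smul, toPoly]
  rw [Finsupp.sum, Finsupp.sum, Finset.sum_congr rfl (fun i _ => hterm i (x i)),
    Finset.sum_add_distrib]
  congr 1
  rw [Finset.sum_ite_eq' x.support (⟨0, hn⟩ : Fin n) (fun i => x i • X (⟨0, hn⟩ : Fin n))]
  split_ifs with h
  · rfl
  · rw [Finsupp.notMem_support_iff.mp h, zero_smul]

end Aux3
section Aux4

set_option linter.unusedSectionVars false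
variable {B : Type} [DecidableEq B] {W : Type} [Group W] {M : CoxeterMatrix B}

private lemma select_toFinset_eq (l : List B) (J : Finset (Fin l.length)) :
    ((List.finRange l.length).filter (· ∈ J)).toFinset = J := by
  ext k
  simp [List.mem_filter, List.mem_finRange]

private lemma select_filter_nodup (l : List B) (J : Finset (Fin l.length)) :
    ((List.finRange l.length).filter (· ∈ J)).Nodup :=
  (List.nodup_finRange _).filter _

private lemma select_length (l : List B) (J : Finset (Fin l.length)) :
    (select l J).length = J.card := by
  rw [select, List.length_map, ← List.toFinset_card_of_nodup (select_filter_nodup l J),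
    select_toFinset_eq]

private lemma select_univ (l : List B) : select l Finset.univ = l := by
  rw [select]
  have h : (List.finRange l.length).filter (· ∈ (Finset.univ : Finset (Fin l.length)))
      = List.finRange l.length := List.filter_eq_self.mpr (by simp)
  rw [h, List.map_get_finRange]

private lemma prod_over_select {R : Type} [CommMonoid R] (l : List B)
    (J : Finset (Fin l.length)) (g : B → R) :
    (∏ k ∈ J, g (l.get k)) = ((select l J).map g).prod := by
  rw [select, List.map_map, ← List.prod_toFinset (g ∘ l.get) (select_filter_nodup l J),
    select_toFinset_eq]
  rfl

private lemma prod_map_ite_count {R : Type} [CommMonoid R] (z : B) (two : R)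
    (m : List B) :
    ((m.map fun a => if a = z then two else 1)).prod = two ^ (m.count z) := by
  induction m with
  | nil => simp
  | cons a m ih =>
    rcases eq_or_ne a z with h | h
    · subst h
      simp [List.count_cons, ih, pow_succ, mul_comm]
    · simp [List.count_cons, ih, h, Ne.symm h]

private lemma reduced_word_length {cs : CoxeterSystem M W} {l : List B} {w : W}
    (hl : IsReducedWordFor cs l w) : cs.length w = l.length := by
  have := hl.1
  unfold CoxeterSystem.IsReduced at this
  rw [hl.2] at this
  exact this

private lemma select_reduced_univ {cs : CoxeterSystem M W} {l : List B} {w w' : W}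
    {J : Finset (Fin l.length)} (hl : IsReducedWordFor cs l w)
    (hJ : IsReducedWordFor cs (select l J) w') (hlen : cs.length w ≤ cs.length w') :
    J = Finset.univ := by
  have e1 : cs.length w' = J.card := by rw [reduced_word_length hJ, select_length]
  have e2 : cs.length w = l.length := reduced_word_length hl
  have e3 : J.card ≤ l.length := le_trans (Finset.card_le_univ J) (by simp)
  exact (Finset.card_eq_iff_eq_univ J).mp (by simp only [Fintype.card_fin]; omega)

private lemma billey_diag (cs : CoxeterSystem M W) (A : B → B → ℤ) {w : W} {l : List B}
    (hl : IsReducedWordFor cs l w) :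
    billey cs A w l = ∏ k : Fin l.length, toPoly (rootOf A l k) := by
  classical
  have h0 : ∀ J ∈ (Finset.univ : Finset (Finset (Fin l.length))), J ≠ Finset.univ →
      (if IsReducedWordFor cs (select l J) w then ∏ k ∈ J, toPoly (rootOf A l k) else 0) = 0 := by
    intro J _ hJne
    rw [if_neg]
    intro hc
    exact hJne (select_reduced_univ hl hc le_rfl)
  rw [billey, Finset.sum_eq_single_of_mem Finset.univ (Finset.mem_univ _) h0,
    if_pos (by rw [select_univ]; exact hl)]

private lemma billey_eq_zero (cs : CoxeterSystem M W) (A : B → B → ℤ) {w' w : W} {l : List B}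
    (hl : IsReducedWordFor cs l w) (hne : w' ≠ w) (hlen : cs.length w ≤ cs.length w') :
    billey cs A w' l = 0 := by
  classical
  rw [billey]
  refine Finset.sum_eq_zero fun J _ => ?_
  rw [if_neg]
  intro hJ
  have e4 : J = Finset.univ := select_reduced_univ hl hJ hlen
  apply hne
  rw [← hJ.2, e4, select_univ, hl.2]

private lemma billey_diag_ne_zero {n : ℕ} {W : Type} [Group W]
    (cs : CoxeterSystem (BCMatrix n) W) {w : W} {l : List (Fin n)}
    (hl : IsReducedWordFor cs l w) :
    billey cs (cartanB n) w l ≠ 0 := by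
  rw [billey_diag cs _ hl]
  refine Finset.prod_ne_zero_iff.mpr fun k _ => ?_
  refine toPoly_ne_zero (rootOf_ne_zero _ (fun i => ?_) l k)
  simp [cartanB]

end Aux4
section Aux5

set_option linter.unusedSectionVars false
variable {W : Type} [Group W]

private lemma barSub_billey {n : ℕ} (hn : 0 < n) (cs : CoxeterSystem (BCMatrix n) W)
    (s : W → ℕ)
    (hs : ∀ (w : W) (l : List (Fin n)), IsReducedWordFor cs l w →
      l.count (⟨0, hn⟩ : Fin n) = s w)
    (w : W) (l : List (Fin n)) :
    barSub n (billey cs (cartanC n) w l) =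
      (2 : MvPolynomial (Fin n) ℤ) ^ (s w) * billey cs (cartanB n) w l := by
  classical
  rw [billey, billey, map_sum, Finset.mul_sum]
  refine Finset.sum_congr rfl fun J _ => ?_
  split_ifs with h
  · rw [map_prod]
    have hroot : ∀ k ∈ J, barSub n (toPoly (rootOf (cartanC n) l k)) =
        MvPolynomial.C (if l.get k = (⟨0, hn⟩ : Fin n) then (2:ℤ) else 1) *
          toPoly (rootOf (cartanB n) l k) := by
      intro k _
      rw [barSub_toPoly hn, doub_rootOf hn, toPoly_smul, MvPolynomial.smul_eq_C_mul]
    rw [Finset.prod_congr rfl hroot, Finset.prod_mul_distrib,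
      ← map_prod (MvPolynomial.C : ℤ →+* MvPolynomial (Fin n) ℤ)
        (fun k => if l.get k = (⟨0, hn⟩ : Fin n) then (2:ℤ) else 1) J]
    have hcount : (∏ k ∈ J, (if l.get k = (⟨0, hn⟩ : Fin n) then (2:ℤ) else 1)) = 2 ^ (s w) := by
      rw [prod_over_select l J (fun a => if a = (⟨0, hn⟩ : Fin n) then (2:ℤ) else 1),
        prod_map_ite_count, hs w (select l J) h]
    rw [hcount, map_pow, map_ofNat]
  · rw [map_zero, mul_zero]

end Aux5
section Aux6

private lemma hz1 {K : Type*} [Field K] {a : K} (ha : a ≠ 0) (p q : ℕ) (x y : K) :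
    a ^ (-(p:ℤ) - q) * ((a ^ p * x) * (a ^ q * y)) = x * y := by
  have h1 : a ^ (-(p:ℤ) - q) * (a ^ p * a ^ q) = 1 := by
    rw [← zpow_natCast a p, ← zpow_natCast a q, ← zpow_add₀ ha, ← zpow_add₀ ha]
    rw [show (-(p:ℤ) - q + (p + q)) = 0 by ring, zpow_zero]
  calc a ^ (-(p:ℤ) - q) * ((a ^ p * x) * (a ^ q * y))
      = (a ^ (-(p:ℤ) - q) * (a ^ p * a ^ q)) * (x * y) := by ring
    _ = x * y := by rw [h1, one_mul]

private lemma hz2 {K : Type*} [Field K] {a : K} (ha : a ≠ 0) (m p q : ℕ) (c b : K) :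
    a ^ (-(p:ℤ) - q) * (c * (a ^ m * b)) = a ^ ((m:ℤ) - (p:ℤ) - (q:ℤ)) * c * b := by
  rw [← zpow_natCast a m, show ((m:ℤ) - p - q) = (-(p:ℤ) - q) + m by ring, zpow_add₀ ha]
  ring

end Aux6

open scoped Classical in
/-- Let `X = SO_{2n+1}/B` and `Y = Sp_{2n}/B`, with common hyperoctahedral Weyl group
`𝔅_n ≅ W`. Let `CX` (resp. `CY`) be the equivariant Schubert structure coefficients of `X`
(resp. `Y`), characterized by the pointwise relations
`ξ_u|_x · ξ_v|_x = Σ_w C_{u,v}^w ξ_w|_x` for all `x`, where `ξ_w|_x` is given by Billey's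
formula in type `B` (resp. type `C`).  Then, in the fraction field of `ℤ[β_1, …, β_n]`,
`C_{u,v}^w(X) = 2^(s(w) - s(u) - s(v)) · overline{C_{u,v}^w(Y)}`, where the overline denotes
the substitution `γ_1 ↦ 2β_1`, `γ_i ↦ β_i (i > 1)`, and `s(w)` is the number of negative
entries of `w` (characterized by: every reduced word of `w` uses `s_1` exactly `s w` times). -/
theorem structure_coeff_B_eq_two_pow_mul_structure_coeff_C
    {n : ℕ} (hn : 0 < n) {W : Type} [Group W] [Fintype W]
    (cs : CoxeterSystem (BCMatrix n) W)
    (s : W → ℕ)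
    (hs : ∀ (w : W) (l : List (Fin n)), IsReducedWordFor cs l w →
      l.count (⟨0, hn⟩ : Fin n) = s w)
    (r : W → List (Fin n)) (hr : ∀ x, IsReducedWordFor cs (r x) x)
    (CX CY : W → W → W → MvPolynomial (Fin n) ℤ)
    (hCX : ∀ u v x : W,
      billey cs (cartanB n) u (r x) * billey cs (cartanB n) v (r x) =
        ∑ w : W, CX u v w * billey cs (cartanB n) w (r x))
    (hCY : ∀ u v x : W,
      billey cs (cartanC n) u (r x) * billey cs (cartanC n) v (r x) =
        ∑ w : W, CY u v w * billey cs (cartanC n) w (r x))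
    (u v w : W) :
    algebraMap (MvPolynomial (Fin n) ℤ) (FractionRing (MvPolynomial (Fin n) ℤ)) (CX u v w) =
      (2 : FractionRing (MvPolynomial (Fin n) ℤ)) ^ ((s w : ℤ) - (s u : ℤ) - (s v : ℤ)) *
        algebraMap (MvPolynomial (Fin n) ℤ) (FractionRing (MvPolynomial (Fin n) ℤ))
          (barSub n (CY u v w)) := by
  classical
  set K := FractionRing (MvPolynomial (Fin n) ℤ) with hK
  set φ : MvPolynomial (Fin n) ℤ →+* K :=
    (algebraMap (MvPolynomial (Fin n) ℤ) K : MvPolynomial (Fin n) ℤ →+* K) with hφdef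
  have hφinj : Function.Injective φ := IsFractionRing.injective _ _
  have ha : (2 : K) ≠ 0 := by
    intro h
    have h2 : φ (2 : MvPolynomial (Fin n) ℤ) = φ 0 := by
      rw [map_ofNat, map_zero, h]
    have := hφinj h2
    exact two_ne_zero this
  -- polynomial-level consequence of hCY
  have hpoly : ∀ x : W,
      ((2 : MvPolynomial (Fin n) ℤ) ^ s u * billey cs (cartanB n) u (r x)) *
        ((2 : MvPolynomial (Fin n) ℤ) ^ s v * billey cs (cartanB n) v (r x)) =
      ∑ w' : W, barSub n (CY u v w') *
        ((2 : MvPolynomial (Fin n) ℤ) ^ s w' * billey cs (cartanB n) w' (r x)) := by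
    intro x
    have e := congrArg (barSub n) (hCY u v x)
    simpa only [map_mul, map_sum, barSub_billey hn cs s hs] using e
  -- K-level combined identity
  have key : ∀ x : W, ∑ w' : W,
      (φ (CX u v w') - (2 : K) ^ ((s w' : ℤ) - (s u : ℤ) - (s v : ℤ)) *
        φ (barSub n (CY u v w'))) * φ (billey cs (cartanB n) w' (r x)) = 0 := by
    intro x
    have h1 : ∑ w' : W, φ (CX u v w') * φ (billey cs (cartanB n) w' (r x))
        = φ (billey cs (cartanB n) u (r x)) * φ (billey cs (cartanB n) v (r x)) := by
      rw [← map_mul, hCX u v x, map_sum]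
      simp only [map_mul]
    have h2 : ∑ w' : W, ((2 : K) ^ ((s w' : ℤ) - (s u : ℤ) - (s v : ℤ)) *
        φ (barSub n (CY u v w'))) * φ (billey cs (cartanB n) w' (r x))
        = φ (billey cs (cartanB n) u (r x)) * φ (billey cs (cartanB n) v (r x)) := by
      have e := congrArg (fun t => (2 : K) ^ (-(s u : ℤ) - (s v : ℤ)) * t)
        (congrArg φ (hpoly x))
      simp only [map_mul, map_sum, map_pow, map_ofNat] at e
      rw [hz1 ha (s u) (s v)] at e
      rw [Finset.mul_sum] at e
      rw [e]
      refine Finset.sum_congr rfl fun w' _ => ?_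
      rw [hz2 ha (s w') (s u) (s v)]
    calc ∑ w' : W, (φ (CX u v w') - (2 : K) ^ ((s w' : ℤ) - (s u : ℤ) - (s v : ℤ)) *
            φ (barSub n (CY u v w'))) * φ (billey cs (cartanB n) w' (r x))
        = (∑ w' : W, φ (CX u v w') * φ (billey cs (cartanB n) w' (r x))) -
          ∑ w' : W, ((2 : K) ^ ((s w' : ℤ) - (s u : ℤ) - (s v : ℤ)) *
            φ (barSub n (CY u v w'))) * φ (billey cs (cartanB n) w' (r x)) := by
          rw [← Finset.sum_sub_distrib]
          exact Finset.sum_congr rfl fun w' _ => by ring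
      _ = 0 := by rw [h1, h2, sub_self]
  -- triangularity and induction
  have main : ∀ (m : ℕ) (w0 : W), cs.length w0 = m →
      φ (CX u v w0) - (2 : K) ^ ((s w0 : ℤ) - (s u : ℤ) - (s v : ℤ)) *
        φ (barSub n (CY u v w0)) = 0 := by
    intro m
    induction m using Nat.strong_induction_on with
    | _ m IH =>
      intro w0 hm
      have h0 := key w0
      have hside : ∀ w' ∈ (Finset.univ : Finset W), w' ≠ w0 →
          (φ (CX u v w') - (2 : K) ^ ((s w' : ℤ) - (s u : ℤ) - (s v : ℤ)) *
            φ (barSub n (CY u v w'))) * φ (billey cs (cartanB n) w' (r w0)) = 0 := by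
        intro w' _ hne
        by_cases hlt : cs.length w' < cs.length w0
        · rw [IH (cs.length w') (hm ▸ hlt) w' rfl, zero_mul]
        · rw [billey_eq_zero cs (cartanB n) (hr w0) hne (le_of_not_gt hlt), map_zero, mul_zero]
      rw [Finset.sum_eq_single_of_mem w0 (Finset.mem_univ w0) hside] at h0
      rcases mul_eq_zero.mp h0 with h | h
      · exact h
      · exfalso
        apply billey_diag_ne_zero cs (hr w0)
        apply hφinj
        rw [map_zero]
        exact h
  have hw := main (cs.length w) w rfl
  have := sub_eq_zero.mp hw
  exact this
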